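/- For all μ, μ' ∈ ℝ and σ > 0, the total variation distance between the Gaussian distributions N(μ, σ²) and N(μ', σ²) on ℝ satisfies d_TV(N(μ, σ²), N(μ', σ²)) = Φ(|μ − μ'|/(2σ)) − Φ(−|μ − μ'|/(2σ)), where Φ is the standard normal cumulative distribution function, and consequently d_TV(N(μ, σ²), N(μ', σ²)) ≤ |μ − μ'| / √(2πσ²). -/

import Mathlib

open MeasureTheory ProbabilityTheory

/-- Total variation distance between two measures:
`sup_{A measurable} |μ(A) − ν(A)|`. -/
noncomputable def tvDist {𝒴 : Type*} [MeasurableSpace 𝒴] (μ ν : Measure 𝒴) : ℝ :=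
  ⨆ A : {A : Set 𝒴 // MeasurableSet A}, |(μ A.1).toReal - (ν A.1).toReal|

/-- The standard normal cumulative distribution function
`Φ(x) = ∫_{-∞}^x (2π)^{-1/2} e^{-u²/2} du`. -/
noncomputable def stdNormalCDF (x : ℝ) : ℝ :=
  ∫ u in Set.Iic x, (Real.sqrt (2 * Real.pi))⁻¹ * Real.exp (-u ^ 2 / 2)

open Set
open scoped NNReal ENNReal

lemma pdf_le' {v : ℝ≥0} (hv : v ≠ 0) (μ μ' x : ℝ) (h : (x - μ) ^ 2 ≤ (x - μ') ^ 2) :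
    gaussianPDFReal μ' v x ≤ gaussianPDFReal μ v x := by
  have hvpos : (0 : ℝ) < v := by positivity
  unfold gaussianPDFReal
  have h2 : Real.exp (-(x - μ') ^ 2 / (2 * v)) ≤ Real.exp (-(x - μ) ^ 2 / (2 * v)) := by
    apply Real.exp_le_exp.mpr
    apply div_le_div_of_nonneg_right _ (by positivity)
    linarith
  exact mul_le_mul_of_nonneg_left h2 (by positivity)

lemma key_le' {p q : ℝ → ℝ} (hp : Integrable p) (hq : Integrable q) {A B : Set ℝ}
    (hA : MeasurableSet A) (hB : MeasurableSet B)
    (hin : ∀ x ∈ B, q x ≤ p x) (hout : ∀ x ∉ B, p x ≤ q x) :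
    (∫ x in A, (p x - q x)) ≤ ∫ x in B, (p x - q x) := by
  have hpq : Integrable (fun x => p x - q x) := hp.sub hq
  have hr : Integrable (fun x => max (p x - q x) 0) := hpq.pos_part
  calc (∫ x in A, (p x - q x)) ≤ ∫ x in A, max (p x - q x) 0 :=
        setIntegral_mono_on hpq.integrableOn hr.integrableOn hA (fun x _ => le_max_left _ _)
    _ ≤ ∫ x, max (p x - q x) 0 :=
        setIntegral_le_integral hr (ae_of_all _ fun x => le_max_right _ _)
    _ = (∫ x in B, max (p x - q x) 0) + ∫ x in Bᶜ, max (p x - q x) 0 :=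
        (integral_add_compl hB hr).symm
    _ = (∫ x in B, (p x - q x)) + 0 := by
        rw [setIntegral_congr_fun hB (fun x hx => max_eq_left (sub_nonneg.2 (hin x hx)))]
        congr 1
        rw [setIntegral_congr_fun hB.compl
          (fun x hx => max_eq_right (sub_nonpos.2 (hout x hx)))]
        simp
    _ = ∫ x in B, (p x - q x) := add_zero _

lemma stdpdf_eq' : gaussianPDFReal 0 1 =
    fun u => (Real.sqrt (2 * Real.pi))⁻¹ * Real.exp (-u ^ 2 / 2) := by
  funext u
  simp [gaussianPDFReal]

lemma gauss_map' (μ σ : ℝ) :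
    gaussianReal μ (Real.toNNReal (σ ^ 2)) =
      (gaussianReal 0 1).map (fun u => σ * u + μ) := by
  have h1 : (gaussianReal 0 1).map (σ * ·) = gaussianReal 0 (Real.toNNReal (σ ^ 2)) := by
    rw [gaussianReal_map_const_mul σ]
    congr 1
    · ring
    · ext
      simp [Real.coe_toNNReal _ (sq_nonneg σ)]
  have h2 : (fun u => σ * u + μ) = (· + μ) ∘ (σ * ·) := rfl
  rw [h2, ← Measure.map_map (measurable_id'.add_const μ) (measurable_const_mul σ), h1,
    gaussianReal_map_add_const μ, zero_add]

lemma gauss_Iic' (μ σ t : ℝ) (hσ : 0 < σ) :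
    ((gaussianReal μ (Real.toNNReal (σ ^ 2))) (Set.Iic t)).toReal
      = stdNormalCDF ((t - μ) / σ) := by
  rw [gauss_map' μ σ, Measure.map_apply ((measurable_const_mul σ).add_const μ) measurableSet_Iic]
  have hpre : (fun u => σ * u + μ) ⁻¹' Set.Iic t = Set.Iic ((t - μ) / σ) := by
    ext u
    simp only [mem_preimage, mem_Iic]
    rw [le_div_iff₀ hσ]
    constructor <;> intro <;> linarith
  rw [hpre, gaussianReal_apply_eq_integral 0 one_ne_zero,
    ENNReal.toReal_ofReal (integral_nonneg fun x => gaussianPDFReal_nonneg _ _ _),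
    stdpdf_eq', stdNormalCDF]

lemma main' (μ μ' σ : ℝ) (hσ : 0 < σ) (hle : μ' ≤ μ) :
    tvDist (gaussianReal μ (Real.toNNReal (σ ^ 2)))
           (gaussianReal μ' (Real.toNNReal (σ ^ 2)))
        = stdNormalCDF (|μ - μ'| / (2 * σ)) - stdNormalCDF (-(|μ - μ'| / (2 * σ)))
      ∧ tvDist (gaussianReal μ (Real.toNNReal (σ ^ 2)))
               (gaussianReal μ' (Real.toNNReal (σ ^ 2)))
          ≤ |μ - μ'| / Real.sqrt (2 * Real.pi * σ ^ 2) := by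
  have habs : |μ - μ'| = μ - μ' := abs_of_nonneg (sub_nonneg.2 hle)
  set v := Real.toNNReal (σ ^ 2) with hvdef
  have hv : v ≠ 0 := (Real.toNNReal_pos.mpr (by positivity)).ne'
  set p := gaussianPDFReal μ v with hpdef
  set q := gaussianPDFReal μ' v with hqdef
  have hp : Integrable p := integrable_gaussianPDFReal μ v
  have hq : Integrable q := integrable_gaussianPDFReal μ' v
  set m : ℝ := (μ + μ') / 2 with hmdef
  set c : ℝ := (μ - μ') / (2 * σ) with hcdef
  have hc0 : 0 ≤ c := div_nonneg (by linarith) (by positivity)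
  have hin : ∀ x ∈ Set.Ici m, q x ≤ p x := by
    intro x hx
    apply pdf_le' hv
    have : m ≤ x := hx
    nlinarith [this, hle]
  have hout : ∀ x ∉ Set.Ici m, p x ≤ q x := by
    intro x hx
    apply pdf_le' hv
    have : x < m := by simpa using hx
    nlinarith [this, hle]
  have htoP : ∀ s : Set ℝ, ((gaussianReal μ v) s).toReal = ∫ x in s, p x := by
    intro s
    rw [gaussianReal_apply_eq_integral μ hv,
      ENNReal.toReal_ofReal (integral_nonneg fun x => gaussianPDFReal_nonneg _ _ _)]
  have htoQ : ∀ s : Set ℝ, ((gaussianReal μ' v) s).toReal = ∫ x in s, q x := by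
    intro s
    rw [gaussianReal_apply_eq_integral μ' hv,
      ENNReal.toReal_ofReal (integral_nonneg fun x => gaussianPDFReal_nonneg _ _ _)]
  set C : ℝ := (∫ x in Set.Ici m, p x) - ∫ x in Set.Ici m, q x with hCdef
  -- total masses
  have htotp : ∫ x, p x = 1 := integral_gaussianPDFReal_eq_one μ hv
  have htotq : ∫ x, q x = 1 := integral_gaussianPDFReal_eq_one μ' hv
  -- the bound for every measurable set
  have hbound : ∀ A : {A : Set ℝ // MeasurableSet A},
      |((gaussianReal μ v) A.1).toReal - ((gaussianReal μ' v) A.1).toReal| ≤ C := by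
    intro A
    rw [htoP, htoQ, abs_sub_le_iff]
    constructor
    · have h := key_le' hp hq A.2 measurableSet_Ici hin hout
      rw [integral_sub hp.integrableOn hq.integrableOn,
        integral_sub hp.integrableOn hq.integrableOn] at h
      linarith
    · have h := key_le' hq hp A.2 measurableSet_Iio
        (fun x hx => hout x (by simpa using not_le.2 hx))
        (fun x hx => hin x (by simpa using not_lt.1 (by simpa using hx)))
      rw [integral_sub hq.integrableOn hp.integrableOn,
        integral_sub hq.integrableOn hp.integrableOn] at h
      have hsplit : (∫ x in Set.Ici m, (q x - p x)) + ∫ x in (Set.Ici m)ᶜ, (q x - p x)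
          = ∫ x, (q x - p x) := integral_add_compl measurableSet_Ici (hq.sub hp)
      rw [compl_Ici] at hsplit
      rw [integral_sub hq.integrableOn hp.integrableOn,
        integral_sub hq.integrableOn hp.integrableOn,
        integral_sub hq hp, htotp, htotq] at hsplit
      linarith
  have hBd : BddAbove (Set.range fun A : {A : Set ℝ // MeasurableSet A} =>
      |((gaussianReal μ v) A.1).toReal - ((gaussianReal μ' v) A.1).toReal|) := by
    refine ⟨C, ?_⟩
    rintro _ ⟨A, rfl⟩
    exact hbound A
  have hCnn : 0 ≤ C := by
    rw [hCdef]
    have := setIntegral_mono_on hq.integrableOn hp.integrableOn measurableSet_Ici hin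
    linarith
  have hBval : |((gaussianReal μ v) (Set.Ici m)).toReal
      - ((gaussianReal μ' v) (Set.Ici m)).toReal| = C := by
    rw [htoP, htoQ, ← hCdef, abs_of_nonneg hCnn]
  have htv : tvDist (gaussianReal μ v) (gaussianReal μ' v) = C := by
    refine le_antisymm (ciSup_le hbound) ?_
    exact le_ciSup_of_le hBd ⟨Set.Ici m, measurableSet_Ici⟩ hBval.ge
  -- compute C via CDFs
  have hIcip : ∀ (μ₀ : ℝ), (∫ x in Set.Ici m, gaussianPDFReal μ₀ v x)
      = 1 - stdNormalCDF ((m - μ₀) / σ) := by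
    intro μ₀
    have hsplit : (∫ x in Set.Ici m, gaussianPDFReal μ₀ v x)
        + ∫ x in (Set.Ici m)ᶜ, gaussianPDFReal μ₀ v x = ∫ x, gaussianPDFReal μ₀ v x :=
      integral_add_compl measurableSet_Ici (integrable_gaussianPDFReal μ₀ v)
    rw [compl_Ici, setIntegral_congr_set Iio_ae_eq_Iic,
      integral_gaussianPDFReal_eq_one μ₀ hv] at hsplit
    have hcdf : (∫ x in Set.Iic m, gaussianPDFReal μ₀ v x) = stdNormalCDF ((m - μ₀) / σ) := by
      rw [← gauss_Iic' μ₀ σ m hσ]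
      rw [gaussianReal_apply_eq_integral μ₀ hv,
        ENNReal.toReal_ofReal (integral_nonneg fun x => gaussianPDFReal_nonneg _ _ _)]
    linarith
  have hmμ : (m - μ) / σ = -c := by
    rw [hmdef, hcdef]
    field_simp
    ring
  have hmμ' : (m - μ') / σ = c := by
    rw [hmdef, hcdef]
    field_simp
    ring
  have hCval : C = stdNormalCDF c - stdNormalCDF (-c) := by
    rw [hCdef, hpdef, hqdef, hIcip μ, hIcip μ', hmμ, hmμ']
    ring
  have hconc1 : tvDist (gaussianReal μ v) (gaussianReal μ' v)
      = stdNormalCDF (|μ - μ'| / (2 * σ)) - stdNormalCDF (-(|μ - μ'| / (2 * σ))) := by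
    rw [htv, hCval, habs, ← hcdef]
  refine ⟨hconc1, ?_⟩
  rw [hconc1, habs, ← hcdef]
  -- part 2: bound Φ(c) - Φ(-c)
  set φ : ℝ → ℝ := fun u => (Real.sqrt (2 * Real.pi))⁻¹ * Real.exp (-u ^ 2 / 2) with hφdef
  have hφint : Integrable φ := by
    rw [hφdef, ← stdpdf_eq']
    exact integrable_gaussianPDFReal 0 1
  have hdiff : stdNormalCDF c - stdNormalCDF (-c) = ∫ x in Set.Ioc (-c) c, φ x := by
    have hunion : Set.Iic (-c) ∪ Set.Ioc (-c) c = Set.Iic c :=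
      Set.Iic_union_Ioc_eq_Iic (neg_le_self hc0)
    have hdisj : Disjoint (Set.Iic (-c)) (Set.Ioc (-c) c) := by
      apply Set.disjoint_left.2
      intro x hx hx2
      exact absurd hx2.1 (not_lt.2 hx)
    have := setIntegral_union hdisj measurableSet_Ioc hφint.integrableOn hφint.integrableOn
    rw [hunion] at this
    have e1 : stdNormalCDF c = ∫ x in Set.Iic c, φ x := rfl
    have e2 : stdNormalCDF (-c) = ∫ x in Set.Iic (-c), φ x := rfl
    rw [e1, e2, this]
    ring
  rw [hdiff]
  have hK : ∀ x ∈ Set.Ioc (-c) c, φ x ≤ (Real.sqrt (2 * Real.pi))⁻¹ := by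
    intro x _
    rw [hφdef]
    have : Real.exp (-x ^ 2 / 2) ≤ 1 := by
      rw [Real.exp_le_one_iff]
      apply div_nonpos_of_nonpos_of_nonneg (neg_nonpos.2 (sq_nonneg x)) (by norm_num)
    calc (Real.sqrt (2 * Real.pi))⁻¹ * Real.exp (-x ^ 2 / 2)
        ≤ (Real.sqrt (2 * Real.pi))⁻¹ * 1 := by
          apply mul_le_mul_of_nonneg_left this (by positivity)
      _ = (Real.sqrt (2 * Real.pi))⁻¹ := mul_one _
  have hconst : IntegrableOn (fun _ : ℝ => (Real.sqrt (2 * Real.pi))⁻¹) (Set.Ioc (-c) c) := by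
    exact integrableOn_const measure_Ioc_lt_top.ne
  calc (∫ x in Set.Ioc (-c) c, φ x)
      ≤ ∫ _x in Set.Ioc (-c) c, (Real.sqrt (2 * Real.pi))⁻¹ :=
        setIntegral_mono_on hφint.integrableOn hconst measurableSet_Ioc hK
    _ = (c - -c) * (Real.sqrt (2 * Real.pi))⁻¹ := by
        rw [setIntegral_const, measureReal_def, Real.volume_Ioc, ENNReal.toReal_ofReal (by linarith), smul_eq_mul]
    _ ≤ (μ - μ') / Real.sqrt (2 * Real.pi * σ ^ 2) := by
        have hsq : Real.sqrt (2 * Real.pi * σ ^ 2) = Real.sqrt (2 * Real.pi) * σ := by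
          rw [Real.sqrt_mul (by positivity), Real.sqrt_sq hσ.le]
        have hs2 : (0:ℝ) < Real.sqrt (2 * Real.pi) := Real.sqrt_pos.2 (by positivity)
        rw [hsq, hcdef]
        apply le_of_eq
        field_simp
        ring

/-- for Gaussians with common variance `σ² > 0`,
`d_TV(N(μ,σ²), N(μ',σ²)) = Φ(|μ−μ'|/(2σ)) − Φ(−|μ−μ'|/(2σ))`, and consequently
`d_TV(N(μ,σ²), N(μ',σ²)) ≤ |μ−μ'|/√(2πσ²)`. -/
theorem stmt18 (μ μ' σ : ℝ) (hσ : 0 < σ) :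
    tvDist (gaussianReal μ (Real.toNNReal (σ ^ 2)))
           (gaussianReal μ' (Real.toNNReal (σ ^ 2)))
        = stdNormalCDF (|μ - μ'| / (2 * σ)) - stdNormalCDF (-(|μ - μ'| / (2 * σ)))
      ∧ tvDist (gaussianReal μ (Real.toNNReal (σ ^ 2)))
               (gaussianReal μ' (Real.toNNReal (σ ^ 2)))
          ≤ |μ - μ'| / Real.sqrt (2 * Real.pi * σ ^ 2) := by
  rcases le_total μ' μ with h | h
  · exact main' μ μ' σ hσ h
  · have h2 := main' μ' μ σ hσ h
    have hsymm : tvDist (gaussianReal μ (Real.toNNReal (σ ^ 2)))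
        (gaussianReal μ' (Real.toNNReal (σ ^ 2)))
        = tvDist (gaussianReal μ' (Real.toNNReal (σ ^ 2)))
          (gaussianReal μ (Real.toNNReal (σ ^ 2))) := by
      unfold tvDist
      simp_rw [abs_sub_comm]
    rwa [abs_sub_comm μ' μ, ← hsymm] at h2
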